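/- Normal factor graph duality for pairwise models: with the primal and dual partition functions defined in the context, Z_d = q^{|E|} · Z_p. That is, for every finite types V, E, endpoint maps s, t : E → V, integer q ≥ 1, edge factors ψ : E → (ZMod q → ℂ) and vertex factors φ : V → (ZMod q → ℂ), one has Σ_{ỹ : E → ZMod q} Π_{e∈E} ψ̃_e(ỹ(e)) · Π_{v∈V} φ̃_v(x̃_v(ỹ)) = q^{|E|} · Σ_{x : V → ZMod q} Π_{e∈E} ψ_e(x(s e) − x(t e)) · Π_{v∈V} φ_v(x(v)). -/

import Mathlib

open scoped BigOperators

/-- The character value ω^{a·b} = exp(−2πi·a·b/q). -/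
noncomputable def omegaPow (q : ℕ) (a b : ZMod q) : ℂ :=
  Complex.exp (-2 * Real.pi * Complex.I * ((a.val * b.val : ℕ) : ℂ) / (q : ℂ))

/-- The discrete Fourier transform of `f : ZMod q → ℂ`. -/
noncomputable def dft (q : ℕ) [NeZero q] (f : ZMod q → ℂ) (b : ZMod q) : ℂ :=
  ∑ a : ZMod q, f a * omegaPow q a b

/-- The dual vertex variable x̃_v(yt). -/
noncomputable def dualX {V E : Type*} [Fintype E] [DecidableEq V]
    (s t : E → V) (q : ℕ) (yt : E → ZMod q) (v : V) : ZMod q :=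
  -((∑ e ∈ Finset.univ.filter (fun e => s e = v), yt e) -
     ∑ e ∈ Finset.univ.filter (fun e => t e = v), yt e)

noncomputable def zetaQ (q : ℕ) : ℂ := Complex.exp (-2 * Real.pi * Complex.I / q)

lemma zetaQ_pow_q (q : ℕ) [NeZero q] : zetaQ q ^ q = 1 := by
  rw [zetaQ, ← Complex.exp_nat_mul]
  have hq : (q : ℂ) ≠ 0 := Nat.cast_ne_zero.2 (NeZero.ne q)
  have h : (q : ℂ) * (-2 * Real.pi * Complex.I / q) = -(2 * Real.pi * Complex.I) := by
    field_simp
  rw [h, Complex.exp_neg, Complex.exp_two_pi_mul_I, inv_one]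

lemma zetaQ_pow_mod (q : ℕ) [NeZero q] (n : ℕ) : zetaQ q ^ n = zetaQ q ^ (n % q) := by
  conv_lhs => rw [← Nat.div_add_mod n q]
  rw [pow_add, pow_mul, zetaQ_pow_q, one_pow, one_mul]

noncomputable def ee (q : ℕ) (c : ZMod q) : ℂ := zetaQ q ^ c.val

lemma omegaPow_eq (q : ℕ) [NeZero q] (a b : ZMod q) : omegaPow q a b = ee q (a * b) := by
  rw [omegaPow, ee, ZMod.val_mul, ← zetaQ_pow_mod, zetaQ, ← Complex.exp_nat_mul]
  congr 1
  push_cast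
  ring

lemma ee_zero (q : ℕ) [NeZero q] : ee q 0 = 1 := by simp [ee]

lemma ee_add (q : ℕ) [NeZero q] (c d : ZMod q) : ee q (c + d) = ee q c * ee q d := by
  rw [ee, ee, ee, ZMod.val_add, ← zetaQ_pow_mod, pow_add]

lemma ee_sum (q : ℕ) [NeZero q] {ι : Type*} (s : Finset ι) (f : ι → ZMod q) :
    ee q (∑ i ∈ s, f i) = ∏ i ∈ s, ee q (f i) := by
  induction s using Finset.cons_induction with
  | empty => simp [ee_zero]
  | cons i s hi ih => rw [Finset.sum_cons, Finset.prod_cons, ee_add, ih]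

lemma isPrimitiveRoot_zetaQ (q : ℕ) [NeZero q] : IsPrimitiveRoot (zetaQ q) q := by
  have h := Complex.isPrimitiveRoot_exp q (NeZero.ne q)
  have : zetaQ q = (Complex.exp (2 * Real.pi * Complex.I / q))⁻¹ := by
    rw [zetaQ, ← Complex.exp_neg]
    congr 1
    ring
  rw [this]
  exact h.inv

lemma sum_ee (q : ℕ) [NeZero q] (a : ZMod q) :
    ∑ c : ZMod q, ee q (a * c) = if a = 0 then (q : ℂ) else 0 := by
  split_ifs with h
  · subst h
    simp [ee_zero, ZMod.card]
  · have hcalc : ∀ c : ZMod q, ee q (a * c) = (zetaQ q ^ a.val) ^ c.val := by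
      intro c
      rw [ee, ZMod.val_mul, ← zetaQ_pow_mod, pow_mul]
    have hrange : ∑ c : ZMod q, (zetaQ q ^ a.val) ^ c.val
        = ∑ k ∈ Finset.range q, (zetaQ q ^ a.val) ^ k := by
      apply Finset.sum_nbij' (i := fun c : ZMod q => c.val) (j := fun k => (k : ZMod q))
      · intro c _; exact Finset.mem_range.2 (ZMod.val_lt c)
      · intro k _; exact Finset.mem_univ _
      · intro c _; exact ZMod.natCast_rightInverse c
      · intro k hk; exact ZMod.val_cast_of_lt (Finset.mem_range.1 hk)
      · intro c _; rfl
    have hw : zetaQ q ^ a.val ≠ 1 := by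
      intro hcon
      have := (isPrimitiveRoot_zetaQ q).pow_ne_one_of_pos_of_lt
        (fun h0 => h ((ZMod.val_eq_zero a).1 h0)) (ZMod.val_lt a)
      exact this hcon
    have hwq : (zetaQ q ^ a.val) ^ q = 1 := by
      rw [← pow_mul, mul_comm, pow_mul, zetaQ_pow_q, one_pow]
    rw [Finset.sum_congr rfl (fun c _ => hcalc c), hrange, geom_sum_eq hw, hwq]
    simp

lemma dualX_char {V E : Type*} [Fintype V] [Fintype E] [DecidableEq V]
    (s t : E → V) (q : ℕ) [NeZero q] (x : V → ZMod q) (yt : E → ZMod q) :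
    ∏ v : V, omegaPow q (x v) (dualX s t q yt v)
      = ∏ e : E, ee q ((x (t e) - x (s e)) * yt e) := by
  have hsum : ∑ v : V, x v * dualX s t q yt v
      = ∑ e : E, (x (t e) - x (s e)) * yt e := by
    have h1 : ∀ v : V, x v * dualX s t q yt v =
        (∑ e ∈ Finset.univ.filter (fun e => t e = v), x v * yt e)
        - (∑ e ∈ Finset.univ.filter (fun e => s e = v), x v * yt e) := by
      intro v
      simp [dualX, neg_sub, mul_sub, Finset.mul_sum]
    calc ∑ v : V, x v * dualX s t q yt v
        = (∑ v : V, ∑ e ∈ Finset.univ.filter (fun e => t e = v), x (t e) * yt e)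
          - (∑ v : V, ∑ e ∈ Finset.univ.filter (fun e => s e = v), x (s e) * yt e) := by
          rw [← Finset.sum_sub_distrib]
          refine Finset.sum_congr rfl fun v _ => ?_
          rw [h1 v]
          congr 1
          · exact Finset.sum_congr rfl fun e he => by rw [(Finset.mem_filter.1 he).2]
          · exact Finset.sum_congr rfl fun e he => by rw [(Finset.mem_filter.1 he).2]
      _ = (∑ e : E, x (t e) * yt e) - (∑ e : E, x (s e) * yt e) := by
          rw [Finset.sum_fiberwise, Finset.sum_fiberwise]
      _ = ∑ e : E, (x (t e) - x (s e)) * yt e := by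
          rw [← Finset.sum_sub_distrib]
          exact Finset.sum_congr rfl fun e _ => by ring
  calc ∏ v : V, omegaPow q (x v) (dualX s t q yt v)
      = ∏ v : V, ee q (x v * dualX s t q yt v) :=
        Finset.prod_congr rfl fun v _ => omegaPow_eq q _ _
    _ = ee q (∑ v : V, x v * dualX s t q yt v) := (ee_sum q _ _).symm
    _ = ee q (∑ e : E, (x (t e) - x (s e)) * yt e) := by rw [hsum]
    _ = ∏ e : E, ee q ((x (t e) - x (s e)) * yt e) := ee_sum q _ _

/-- NFG duality for pairwise models: `Z_d = q^{|E|} · Z_p`. -/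
theorem nfg_duality {V E : Type*} [Fintype V] [Fintype E] [DecidableEq V] [DecidableEq E]
    (s t : E → V) (q : ℕ) [NeZero q]
    (ψ : E → ZMod q → ℂ) (φ : V → ZMod q → ℂ) :
    (∑ yt : E → ZMod q,
        (∏ e : E, dft q (ψ e) (yt e)) * ∏ v : V, dft q (φ v) (dualX s t q yt v)) =
      (q : ℂ) ^ Fintype.card E *
        ∑ x : V → ZMod q, (∏ e : E, ψ e (x (s e) - x (t e))) * ∏ v : V, φ v (x v) := by
  classical
  calc
    (∑ yt : E → ZMod q,
        (∏ e : E, dft q (ψ e) (yt e)) * ∏ v : V, dft q (φ v) (dualX s t q yt v))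
      = ∑ yt : E → ZMod q, ∑ a : E → ZMod q, ∑ x : V → ZMod q,
          ((∏ e : E, ψ e (a e)) * (∏ v : V, φ v (x v))) *
            ∏ e : E, ee q ((a e + (x (t e) - x (s e))) * yt e) := by
        refine Finset.sum_congr rfl fun yt _ => ?_
        simp only [dft]
        rw [Fintype.prod_sum (fun e (c : ZMod q) => ψ e c * omegaPow q c (yt e)),
            Fintype.prod_sum (fun v (b : ZMod q) => φ v b * omegaPow q b (dualX s t q yt v)),
            Finset.sum_mul_sum]
        refine Finset.sum_congr rfl fun a _ => Finset.sum_congr rfl fun x _ => ?_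
        rw [Finset.prod_mul_distrib, Finset.prod_mul_distrib]
        have h1 : ∏ e : E, omegaPow q (a e) (yt e) = ∏ e : E, ee q (a e * yt e) :=
          Finset.prod_congr rfl fun e _ => omegaPow_eq q _ _
        rw [h1, dualX_char s t q x yt]
        have h2 : (∏ e : E, ee q (a e * yt e)) * ∏ e : E, ee q ((x (t e) - x (s e)) * yt e)
            = ∏ e : E, ee q ((a e + (x (t e) - x (s e))) * yt e) := by
          rw [← Finset.prod_mul_distrib]
          exact Finset.prod_congr rfl fun e _ => by rw [← ee_add, ← add_mul]
        calc ((∏ e : E, ψ e (a e)) * ∏ e : E, ee q (a e * yt e)) *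
              ((∏ v : V, φ v (x v)) * ∏ e : E, ee q ((x (t e) - x (s e)) * yt e))
            = ((∏ e : E, ψ e (a e)) * (∏ v : V, φ v (x v))) *
              ((∏ e : E, ee q (a e * yt e)) * ∏ e : E, ee q ((x (t e) - x (s e)) * yt e)) := by
              ring
          _ = _ := by rw [h2]
    _ = ∑ a : E → ZMod q, ∑ x : V → ZMod q,
          ((∏ e : E, ψ e (a e)) * (∏ v : V, φ v (x v))) *
            ∏ e : E, (if a e = x (s e) - x (t e) then (q : ℂ) else 0) := by
        rw [Finset.sum_comm]
        refine Finset.sum_congr rfl fun a _ => ?_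
        rw [Finset.sum_comm]
        refine Finset.sum_congr rfl fun x _ => ?_
        rw [← Finset.mul_sum]
        congr 1
        rw [← Fintype.prod_sum (fun e (c : ZMod q) => ee q ((a e + (x (t e) - x (s e))) * c))]
        refine Finset.prod_congr rfl fun e _ => ?_
        rw [sum_ee]
        congr 1
        simp only [eq_iff_iff]
        constructor
        · intro h; linear_combination h
        · intro h; rw [h]; ring
    _ = ∑ x : V → ZMod q, ∑ a : E → ZMod q,
          (∏ v : V, φ v (x v)) *
            ∏ e : E, (ψ e (a e) * if a e = x (s e) - x (t e) then (q : ℂ) else 0) := by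
        rw [Finset.sum_comm]
        refine Finset.sum_congr rfl fun x _ => Finset.sum_congr rfl fun a _ => ?_
        rw [Finset.prod_mul_distrib]
        ring
    _ = ∑ x : V → ZMod q,
          (∏ v : V, φ v (x v)) *
            ∏ e : E, ((q : ℂ) * ψ e (x (s e) - x (t e))) := by
        refine Finset.sum_congr rfl fun x _ => ?_
        rw [← Finset.mul_sum]
        congr 1
        rw [← Fintype.prod_sum
          (fun e (c : ZMod q) => ψ e c * if c = x (s e) - x (t e) then (q : ℂ) else 0)]
        refine Finset.prod_congr rfl fun e _ => ?_
        simp [Finset.sum_ite_eq', mul_comm]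
    _ = (q : ℂ) ^ Fintype.card E *
        ∑ x : V → ZMod q, (∏ e : E, ψ e (x (s e) - x (t e))) * ∏ v : V, φ v (x v) := by
        rw [Finset.mul_sum]
        refine Finset.sum_congr rfl fun x _ => ?_
        rw [Finset.prod_mul_distrib, Finset.prod_const, Finset.card_univ]
        ring
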